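/- Let (X_1,...,X_n) be an exchangeable MVG random vector with parameters satisfying \theta_{\{i_1,...,i_s\}} = \theta_s for all 1 \le s \le n and all s-element subsets, with at least one \theta_s < 1. Then for 1 \le r \le n and positive integer p, the p-th factorial moment of X_{r:n} equals p! \sum_{j=0}^{r-1} (-1)^{r-1-j} \binom{n-j-1}{n-r} \binom{n}{j} ( 1/(1 - \prod_{s=1}^n \theta_s^{\binom{n}{s} - \binom{j}{s}}) - 1 )^p, with the convention \binom{j}{s} = 0 for s > j. -/

import Mathlib

open MeasureTheory ProbabilityTheory
open scoped ENNReal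

/-- The components of a multivariate geometric (MVG) vector: `X_i = min {M_I : I ∋ i}`. -/
noncomputable def mvgX {Ω : Type*} {n : ℕ}
    (M : {I : Finset (Fin n) // I.Nonempty} → Ω → ℕ) (i : Fin n) (ω : Ω) : ℕ :=
  sInf {x | ∃ I : {I : Finset (Fin n) // I.Nonempty}, i ∈ I.1 ∧ M I ω = x}

/-- The `r`-th order statistic (r-th smallest, `r ∈ {1,...,n}`) of `X_1,...,X_n`. -/
noncomputable def orderStat {Ω : Type*} {n : ℕ} (r : ℕ) (X : Fin n → Ω → ℕ) (ω : Ω) : ℕ :=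
  sInf {m | r ≤ (Finset.univ.filter (fun i => X i ω ≤ m)).card}

open Finset

/-- auxiliary alternating identity -/
lemma aux_alt (a L m : ℕ) (hm : m ≤ L) :
    (∑ u ∈ Icc a L, (-1:ℤ)^(u-a) * (u.choose a) * (m.choose u)) = if m = a then 1 else 0 := by
  rcases lt_or_ge m a with h | h
  · rw [if_neg (by omega)]
    apply Finset.sum_eq_zero
    intro u hu
    rw [mem_Icc] at hu
    have h0 : m.choose u = 0 := Nat.choose_eq_zero_of_lt (by omega)
    rw [h0]; ring
  · -- a ≤ m
    have h1 : ∀ u ∈ Icc a L, u ∉ Icc a m → (-1:ℤ)^(u-a) * (u.choose a) * (m.choose u) = 0 := by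
      intro u hu hu'
      rw [mem_Icc] at hu hu'
      have h0 : m.choose u = 0 := Nat.choose_eq_zero_of_lt (by omega)
      rw [h0]; ring
    rw [← Finset.sum_subset (Finset.Icc_subset_Icc_right hm) h1]
    have h2 : ∀ u ∈ Icc a m, (-1:ℤ)^(u-a) * (u.choose a) * (m.choose u)
        = (m.choose a : ℤ) * ((-1:ℤ)^(u-a) * ((m-a).choose (u-a))) := by
      intro u hu
      rw [mem_Icc] at hu
      have h4 := Nat.choose_mul (n := m) (k := u) (s := a) hu.1
      have h5 : (m.choose u : ℤ) * (u.choose a) = (m.choose a : ℤ) * ((m-a).choose (u-a)) := by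
        exact_mod_cast congrArg (Nat.cast (R := ℤ)) h4
      linear_combination ((-1:ℤ)^(u-a)) * h5
    rw [Finset.sum_congr rfl h2, ← Finset.mul_sum]
    have h3 : ∑ u ∈ Icc a m, (-1:ℤ)^(u-a) * ((m-a).choose (u-a))
        = ∑ v ∈ range (m - a + 1), (-1:ℤ)^v * ((m-a).choose v) := by
      refine Finset.sum_nbij' (fun u => u - a) (fun v => v + a) ?_ ?_ ?_ ?_ ?_
      · intro u hu; simp only [mem_Icc] at hu; simp only [mem_range]; omega
      · intro v hv; simp only [mem_range] at hv; simp only [mem_Icc]; omega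
      · intro u hu; simp only [mem_Icc] at hu; omega
      · intro v hv; omega
      · intro u hu; rfl
    rw [h3, Int.alternating_sum_range_choose]
    rcases eq_or_lt_of_le h with rfl | h'
    · simp
    · rw [if_neg (by omega), if_neg (by omega), mul_zero]

/-- the key Bonferroni-type identity -/
lemma key_ident (a n : ℕ) (ha : a < n) : ∀ m : ℕ, m ≤ n →
    (∑ t ∈ Icc (a+1) n, (-1:ℤ)^(t-1-a) * ((t-1).choose a) * (m.choose t))
      = if a < m then 1 else 0 := by
  intro m
  induction m with
  | zero =>
    intro _
    rw [if_neg (by omega)]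
    apply Finset.sum_eq_zero
    intro t ht
    rw [mem_Icc] at ht
    have h0 : Nat.choose 0 t = 0 := Nat.choose_eq_zero_of_lt (by omega)
    rw [h0]; ring
  | succ m ih =>
    intro hmn
    have hm : m ≤ n := by omega
    have hstep : ∀ t ∈ Icc (a+1) n,
        (-1:ℤ)^(t-1-a) * ((t-1).choose a) * ((m+1).choose t)
        = (-1:ℤ)^(t-1-a) * ((t-1).choose a) * (m.choose t)
          + (-1:ℤ)^(t-1-a) * ((t-1).choose a) * (m.choose (t-1)) := by
      intro t ht
      rw [mem_Icc] at ht
      obtain ⟨u, rfl⟩ : ∃ u, t = u + 1 := ⟨t - 1, by omega⟩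
      rw [Nat.choose_succ_succ]
      push_cast
      ring
    rw [Finset.sum_congr rfl hstep, Finset.sum_add_distrib, ih hm]
    have hU : ∑ t ∈ Icc (a+1) n, (-1:ℤ)^(t-1-a) * ((t-1).choose a) * (m.choose (t-1))
        = ∑ u ∈ Icc a (n-1), (-1:ℤ)^(u-a) * (u.choose a) * (m.choose u) := by
      refine Finset.sum_nbij' (fun t => t - 1) (fun u => u + 1) ?_ ?_ ?_ ?_ ?_
      · intro t ht; simp only [mem_Icc] at ht ⊢; omega
      · intro u hu; simp only [mem_Icc] at hu ⊢; omega
      · intro t ht; simp only [mem_Icc] at ht; omega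
      · intro u hu; omega
      · intro t ht; rfl
    rw [hU, aux_alt a (n-1) m (by omega)]
    rcases lt_trichotomy m a with h | rfl | h
    · rw [if_neg (by omega), if_neg (by omega), if_neg (by omega)]; ring
    · simp
    · rw [if_pos h, if_neg (by omega), if_pos (by omega)]; ring

lemma comb_real (n r N : ℕ) (hr : 1 ≤ r) (hrn : r ≤ n) (hN : N ≤ n) :
    (∑ j ∈ range r, (-1:ℝ)^(r-1-j) * ((n-j-1).choose (n-r)) * ((n-N).choose (n-j)))
      = if N < r then 1 else 0 := by
  have key := key_ident (n-r) n (by omega) (n-N) (by omega)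
  have h2 : ∑ t ∈ Icc (n-r+1) n, (-1:ℤ)^(t-1-(n-r)) * ((t-1).choose (n-r)) * ((n-N).choose t)
      = ∑ j ∈ range r, (-1:ℤ)^(r-1-j) * ((n-j-1).choose (n-r)) * ((n-N).choose (n-j)) := by
    refine Finset.sum_nbij' (fun t => n - t) (fun j => n - j) ?_ ?_ ?_ ?_ ?_
    · intro t ht; simp only [mem_Icc] at ht; simp only [mem_range]; omega
    · intro j hj; simp only [mem_range] at hj; simp only [mem_Icc]; omega
    · intro t ht; simp only [mem_Icc] at ht; omega
    · intro j hj; simp only [mem_range] at hj; omega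
    · intro t ht
      simp only [mem_Icc] at ht
      have e1 : n - (n - t) = t := by omega
      have e2 : r - 1 - (n - t) = t - 1 - (n-r) := by omega
      have e3 : n - (n - t) - 1 = t - 1 := by omega
      rw [e3, e2, e1]
  rw [h2] at key
  rcases lt_or_ge N r with h | h
  · rw [if_pos (by omega : n - r < n - N)] at key
    rw [if_pos h]
    exact_mod_cast key
  · rw [if_neg (by omega : ¬ n - r < n - N)] at key
    rw [if_neg (by omega)]
    exact_mod_cast key


lemma summable_choose_geom (m j : ℕ) {q : ℝ} (h0 : 0 ≤ q) (h1 : q < 1) :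
    Summable (fun k : ℕ => ((k+j).choose m : ℝ) * q^k) := by
  have hq : ‖q‖ < 1 := by rwa [Real.norm_eq_abs, abs_of_nonneg h0]
  have hs : ∀ i : ℕ, Summable (fun k : ℕ => (k:ℝ)^i * q^k) := fun i =>
    summable_pow_mul_geometric_of_norm_lt_one i hq
  have hg : Summable (fun k : ℕ => ((k:ℝ)+j)^m * q^k) := by
    have hsum : Summable (fun k : ℕ =>
        ∑ i ∈ range (m+1), ((j:ℝ)^(m-i) * (m.choose i : ℝ)) * ((k:ℝ)^i * q^k)) :=
      summable_sum (fun i _ => (hs i).mul_left _)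
    apply hsum.congr
    intro k
    rw [add_pow, Finset.sum_mul]
    exact Finset.sum_congr rfl (fun i _ => by ring)
  apply Summable.of_nonneg_of_le (fun k => by positivity) _ hg
  intro k
  have hb : ((k+j).choose m : ℝ) ≤ ((k:ℝ)+j)^m := by
    calc ((k+j).choose m : ℝ) ≤ ((k+j:ℕ):ℝ)^m / (m.factorial : ℝ) :=
          Nat.choose_le_pow_div m (k+j)
    _ ≤ ((k+j:ℕ):ℝ)^m := by
        apply div_le_self (by positivity)
        exact_mod_cast Nat.one_le_iff_ne_zero.2 m.factorial_ne_zero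
    _ = ((k:ℝ)+j)^m := by push_cast; ring
  exact mul_le_mul_of_nonneg_right hb (by positivity)

lemma hasSum_choose_geom (m : ℕ) {q : ℝ} (h0 : 0 ≤ q) (h1 : q < 1) :
    HasSum (fun k : ℕ => ((k+m).choose m : ℝ) * q^k) (1/(1-q)^(m+1)) := by
  have h1q : (0:ℝ) < 1 - q := by linarith
  induction m with
  | zero => simpa using hasSum_geometric_of_lt_one h0 h1
  | succ m ih =>
    have hsum : Summable (fun k : ℕ => ((k+(m+1)).choose (m+1) : ℝ) * q^k) :=
      summable_choose_geom _ _ h0 h1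
    set A := ∑' k : ℕ, ((k+(m+1)).choose (m+1) : ℝ) * q^k with hA_def
    have hA : HasSum (fun k : ℕ => ((k+(m+1)).choose (m+1) : ℝ) * q^k) A := hsum.hasSum
    have hg : Summable (fun k : ℕ => ((k+m).choose (m+1) : ℝ) * q^k) := by
      apply Summable.of_nonneg_of_le (fun k => by positivity) _ hsum
      intro k
      apply mul_le_mul_of_nonneg_right _ (by positivity)
      exact_mod_cast Nat.choose_le_choose (m+1) (by omega)
    -- tsum of shifted = q * A
    have hshift : ∑' k : ℕ, ((k+m).choose (m+1):ℝ) * q^k = q * A := by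
      rw [hg.tsum_eq_zero_add]
      have hz : ((0+m).choose (m+1):ℝ) * q^0 = 0 := by
        rw [Nat.choose_eq_zero_of_lt (by omega)]; simp
      rw [hz, zero_add]
      rw [← tsum_mul_left]
      apply tsum_congr
      intro k
      have : k + 1 + m = k + (m+1) := by omega
      rw [this]
      ring
    -- Pascal: f = ih-term + g
    have hkey : ∀ k : ℕ, ((k+(m+1)).choose (m+1):ℝ) * q^k
        = ((k+m).choose m : ℝ) * q^k + ((k+m).choose (m+1):ℝ) * q^k := by
      intro k
      have : (k+(m+1)).choose (m+1) = (k+m).choose m + (k+m).choose (m+1) := by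
        rw [show k+(m+1) = (k+m)+1 from rfl, Nat.choose_succ_succ]
      rw [this]
      push_cast
      ring
    have hsplit : A = 1/(1-q)^(m+1) + q * A := by
      calc A = ∑' k : ℕ, (((k+m).choose m : ℝ) * q^k + ((k+m).choose (m+1):ℝ) * q^k) :=
            tsum_congr hkey
      _ = (∑' k : ℕ, ((k+m).choose m : ℝ) * q^k) + ∑' k : ℕ, ((k+m).choose (m+1):ℝ) * q^k :=
            ih.summable.tsum_add hg
      _ = 1/(1-q)^(m+1) + q * A := by rw [ih.tsum_eq, hshift]
    have hval : A = 1/(1-q)^(m+1+1) := by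
      have hne : (1-q) ≠ 0 := ne_of_gt h1q
      have h2 : A * (1-q) = 1/(1-q)^(m+1) := by linear_combination hsplit
      field_simp at h2 ⊢
      linear_combination h2
    rw [← hval]
    exact hA

lemma hasSum_desc_geom (m : ℕ) {q : ℝ} (h0 : 0 ≤ q) (h1 : q < 1) :
    HasSum (fun k : ℕ => (k.descFactorial m : ℝ) * q^k)
      ((m.factorial : ℝ) * q^m * (1/(1-q)^(m+1))) := by
  have h := (hasSum_choose_geom m h0 h1).mul_left ((m.factorial : ℝ) * q^m)
  have h2 : HasSum (fun k : ℕ => (((k+m).descFactorial m : ℝ)) * q^(k+m))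
      ((m.factorial : ℝ) * q^m * (1/(1-q)^(m+1))) := by
    apply h.congr_fun
    intro k
    rw [Nat.descFactorial_eq_factorial_mul_choose]
    push_cast
    rw [pow_add]
    ring
  have h3 := (hasSum_nat_add_iff (f := fun k : ℕ => (k.descFactorial m : ℝ) * q^k) m).mp h2
  have hz : ∑ i ∈ Finset.range m, ((i.descFactorial m : ℝ) * q^i) = 0 :=
    Finset.sum_eq_zero (fun i hi => by
      rw [Nat.descFactorial_of_lt (Finset.mem_range.mp hi)]; simp)
  rwa [hz, add_zero] at h3

lemma hasSum_tail_series (p : ℕ) (hp : 1 ≤ p) {q : ℝ} (h0 : 0 ≤ q) (h1 : q < 1) :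
    HasSum (fun k : ℕ => (p : ℝ) * (k.descFactorial (p-1) : ℝ) * q^(k+1))
      ((p.factorial : ℝ) * (1/(1-q) - 1)^p) := by
  have h1q : (0:ℝ) < 1 - q := by linarith
  have hne : (1-q) ≠ 0 := ne_of_gt h1q
  have h := (hasSum_desc_geom (p-1) h0 h1).mul_left ((p:ℝ) * q)
  have heq : (p:ℝ) * q * (((p-1).factorial : ℝ) * q^(p-1) * (1/(1-q)^(p-1+1)))
      = (p.factorial : ℝ) * (1/(1-q) - 1)^p := by
    have hfac : (p:ℝ) * ((p-1).factorial : ℝ) = (p.factorial : ℝ) := by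
      rw [← Nat.cast_mul, Nat.mul_factorial_pred (by omega)]
    have hqp : q * q^(p-1) = q^p := by
      rw [← pow_succ']
      congr 1
      omega
    have hsub : 1/(1-q) - 1 = q / (1-q) := by field_simp; ring
    rw [hsub, div_pow]
    have hpe : p - 1 + 1 = p := by omega
    rw [hpe]
    rw [← hqp]
    field_simp
    linear_combination (q * q^(p-1) * hfac)
  rw [heq] at h
  apply h.congr_fun
  intro k
  ring


section pointwise
variable {Ω : Type*} {n : ℕ} (M : {I : Finset (Fin n) // I.Nonempty} → Ω → ℕ)

lemma mvgX_le_iff (i : Fin n) (ω : Ω) (k : ℕ) :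
    mvgX M i ω ≤ k ↔ ∃ I : {I : Finset (Fin n) // I.Nonempty}, i ∈ I.1 ∧ M I ω ≤ k := by
  have hne : {x | ∃ I : {I : Finset (Fin n) // I.Nonempty}, i ∈ I.1 ∧ M I ω = x}.Nonempty :=
    ⟨M ⟨{i}, Finset.singleton_nonempty i⟩ ω, ⟨⟨{i}, Finset.singleton_nonempty i⟩,
      Finset.mem_singleton_self i, rfl⟩⟩
  constructor
  · intro h
    obtain ⟨I, hi, hval⟩ := Nat.sInf_mem hne
    exact ⟨I, hi, by rw [hval]; exact h⟩
  · rintro ⟨I, hi, hIk⟩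
    exact le_trans (Nat.sInf_le ⟨I, hi, rfl⟩) hIk

lemma lt_mvgX_iff (i : Fin n) (ω : Ω) (k : ℕ) :
    k < mvgX M i ω ↔ ∀ I : {I : Finset (Fin n) // I.Nonempty}, i ∈ I.1 → k < M I ω := by
  rw [← not_le, mvgX_le_iff]
  push_neg
  rfl

lemma lt_orderStat_iff {r : ℕ} (hrn : r ≤ n) (X : Fin n → Ω → ℕ) (ω : Ω) (k : ℕ) :
    k < orderStat r X ω ↔ (Finset.univ.filter (fun i => X i ω ≤ k)).card < r := by
  have hmono : ∀ {m m' : ℕ}, m ≤ m' →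
      (Finset.univ.filter (fun i => X i ω ≤ m)).card
        ≤ (Finset.univ.filter (fun i => X i ω ≤ m')).card := by
    intro m m' h
    apply Finset.card_le_card
    intro i hi
    simp only [Finset.mem_filter] at hi ⊢
    exact ⟨hi.1, le_trans hi.2 h⟩
  have hne : {m | r ≤ (Finset.univ.filter (fun i => X i ω ≤ m)).card}.Nonempty := by
    refine ⟨Finset.univ.sup (fun i => X i ω), ?_⟩
    have : Finset.univ.filter (fun i => X i ω ≤ Finset.univ.sup (fun i => X i ω))
        = Finset.univ := by
      apply Finset.filter_true_of_mem
      intro i _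
      exact Finset.le_sup (f := fun i => X i ω) (Finset.mem_univ i)
    simp only [Set.mem_setOf_eq, this, Finset.card_univ, Fintype.card_fin]
    exact hrn
  constructor
  · intro h
    by_contra h'
    push_neg at h'
    have hk : k ∈ {m | r ≤ (Finset.univ.filter (fun i => X i ω ≤ m)).card} := h'
    exact absurd (Nat.sInf_le hk) (not_le.2 h)
  · intro h
    by_contra h'
    push_neg at h'
    have hmem : r ≤ (Finset.univ.filter (fun i => X i ω ≤ orderStat r X ω)).card :=
      Nat.sInf_mem hne
    exact absurd (le_trans hmem (hmono h')) (not_le.2 h)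

end pointwise

section counting
variable {n : ℕ}

lemma count_plain (S : Finset (Fin n)) (s : ℕ) :
    ((Finset.univ : Finset (Finset (Fin n))).filter
        (fun J => (J ∩ S).Nonempty ∧ J.card = s)).card
      = n.choose s - (Sᶜ.card).choose s := by
  classical
  set B := (Finset.univ : Finset (Finset (Fin n))).filter (fun J => J.card = s) with hB
  have key := Finset.card_filter_add_card_filter_not
    (s := B) (p := fun J => (J ∩ S).Nonempty)
  have hA : B.filter (fun J => (J ∩ S).Nonempty)
      = (Finset.univ : Finset (Finset (Fin n))).filter
          (fun J => (J ∩ S).Nonempty ∧ J.card = s) := by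
    rw [hB, Finset.filter_filter]
    apply Finset.filter_congr
    intro J _
    tauto
  have hC : B.filter (fun J => ¬ (J ∩ S).Nonempty) = Finset.powersetCard s Sᶜ := by
    ext J
    simp only [hB, Finset.mem_filter, Finset.mem_univ, true_and,
      Finset.not_nonempty_iff_eq_empty, Finset.mem_powersetCard]
    constructor
    · rintro ⟨hcard, hempty⟩
      refine ⟨?_, hcard⟩
      intro x hx
      rw [Finset.mem_compl]
      intro hxS
      have : x ∈ J ∩ S := Finset.mem_inter.2 ⟨hx, hxS⟩
      rw [hempty] at this
      exact absurd this (Finset.notMem_empty x)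
    · rintro ⟨hsub, hcard⟩
      refine ⟨hcard, ?_⟩
      rw [Finset.eq_empty_iff_forall_notMem]
      intro x hx
      rw [Finset.mem_inter] at hx
      exact absurd hx.2 (Finset.mem_compl.1 (hsub hx.1))
  have hBcard : B.card = n.choose s := by
    have : B = Finset.powersetCard s (Finset.univ : Finset (Fin n)) := by
      rw [Finset.powersetCard_eq_filter, Finset.powerset_univ]
    rw [this, Finset.card_powersetCard, Finset.card_univ, Fintype.card_fin]
  rw [hA, hC, hBcard, Finset.card_powersetCard] at key
  omega

end counting

section meas

variable {Ω : Type*} [MeasurableSpace Ω] (μ : Measure Ω) [IsProbabilityMeasure μ]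
  {n : ℕ} (θ : ℕ → ℝ) (M : {I : Finset (Fin n) // I.Nonempty} → Ω → ℕ)

lemma meas_inter_tail (hθ0 : ∀ s, 0 ≤ θ s)
    (hindep : iIndepFun M μ)
    (hgeo : ∀ (I : {I : Finset (Fin n) // I.Nonempty}) (k : ℕ),
      μ {ω | k < M I ω} = ENNReal.ofReal (θ I.1.card ^ (k + 1)))
    (S : Finset (Fin n)) (k : ℕ) :
    μ (⋂ i ∈ S, {ω | k < mvgX M i ω})
      = ENNReal.ofReal
          ((∏ s ∈ Finset.Icc 1 n, θ s ^ (n.choose s - (Sᶜ.card).choose s))^(k+1)) := by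
  classical
  set F : Finset {I : Finset (Fin n) // I.Nonempty} :=
    Finset.univ.filter (fun I => (I.1 ∩ S).Nonempty) with hF
  have hset : (⋂ i ∈ S, {ω | k < mvgX M i ω}) = ⋂ I ∈ F, (M I ⁻¹' Set.Ioi k) := by
    ext ω
    simp only [Set.mem_iInter, Set.mem_setOf_eq, Set.mem_preimage, Set.mem_Ioi, hF,
      Finset.mem_filter, Finset.mem_univ, true_and, lt_mvgX_iff]
    constructor
    · intro h I hI
      obtain ⟨x, hx⟩ := hI
      rw [Finset.mem_inter] at hx
      exact h x hx.2 I hx.1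
    · intro h i hi I hiI
      exact h I ⟨i, Finset.mem_inter.2 ⟨hiI, hi⟩⟩
  rw [hset, hindep.meas_biInter (fun I _ => ⟨Set.Ioi k, measurableSet_Ioi, rfl⟩)]
  have hterm : ∀ I ∈ F, μ (M I ⁻¹' Set.Ioi k) = ENNReal.ofReal (θ I.1.card ^ (k+1)) :=
    fun I _ => hgeo I k
  rw [Finset.prod_congr rfl hterm,
    ← ENNReal.ofReal_prod_of_nonneg (fun I _ => pow_nonneg (hθ0 _) _)]
  congr 1
  rw [Finset.prod_pow]
  congr 1
  -- group by cardinality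
  set P : Finset (Finset (Fin n)) :=
    Finset.univ.filter (fun J => (J ∩ S).Nonempty) with hP
  have step1 : ∏ I ∈ F, θ I.1.card = ∏ J ∈ P, θ J.card := by
    refine Finset.prod_nbij (fun I => I.1) ?_ ?_ ?_ ?_
    · intro I hI
      simp only [hF, Finset.mem_filter, Finset.mem_univ, true_and] at hI
      simp only [hP, Finset.mem_filter, Finset.mem_univ, true_and]
      exact hI
    · exact fun a _ b _ h => Subtype.ext h
    · intro J hJ
      simp only [Finset.coe_filter, Set.mem_setOf_eq, hP, Finset.mem_univ, true_and] at hJ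
      have hJne : J.Nonempty := hJ.mono Finset.inter_subset_left
      refine ⟨⟨J, hJne⟩, ?_, rfl⟩
      simp only [hF, Finset.coe_filter, Set.mem_setOf_eq, Finset.mem_univ, true_and]
      exact hJ
    · intro I _; rfl
  rw [step1]
  have step2 : ∏ s ∈ Finset.Icc 1 n, ∏ J ∈ P.filter (fun J => J.card = s), θ J.card
      = ∏ J ∈ P, θ J.card := by
    apply Finset.prod_fiberwise_of_maps_to
    intro J hJ
    simp only [hP, Finset.mem_filter, Finset.mem_univ, true_and] at hJ
    rw [Finset.mem_Icc]
    constructor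
    · exact Finset.card_pos.2 (hJ.mono Finset.inter_subset_left)
    · have := Finset.card_le_univ J
      simpa using this
  rw [← step2]
  apply Finset.prod_congr rfl
  intro s _
  have hinner : ∏ J ∈ P.filter (fun J => J.card = s), θ J.card
      = ∏ J ∈ P.filter (fun J => J.card = s), θ s := by
    apply Finset.prod_congr rfl
    intro J hJ
    rw [(Finset.mem_filter.1 hJ).2]
  rw [hinner, Finset.prod_const]
  congr 1
  rw [hP, Finset.filter_filter]
  exact count_plain S s

lemma measurable_mvgX_le (hM : ∀ I, Measurable (M I)) (i : Fin n) (k : ℕ) :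
    MeasurableSet {ω | mvgX M i ω ≤ k} := by
  have hs : {ω | mvgX M i ω ≤ k}
      = ⋃ I : {I : Finset (Fin n) // I.Nonempty}, ⋃ (_ : i ∈ I.1), {ω | M I ω ≤ k} := by
    ext ω
    simp [mvgX_le_iff]
  rw [hs]
  exact MeasurableSet.iUnion fun I => MeasurableSet.iUnion fun _ =>
    (hM I) measurableSet_Iic

lemma measurable_lt_mvgX (hM : ∀ I, Measurable (M I)) (i : Fin n) (k : ℕ) :
    MeasurableSet {ω | k < mvgX M i ω} := by
  have hs : {ω | k < mvgX M i ω} = {ω | mvgX M i ω ≤ k}ᶜ := by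
    ext ω
    simp [not_le]
  rw [hs]
  exact (measurable_mvgX_le M hM i k).compl

lemma measurable_card_le (hM : ∀ I, Measurable (M I)) (k : ℕ) :
    Measurable (fun ω => (Finset.univ.filter (fun i => mvgX M i ω ≤ k)).card) := by
  have hXle : ∀ i, MeasurableSet {ω | mvgX M i ω ≤ k} := fun i => measurable_mvgX_le M hM i k
  have hfun : (fun ω => (Finset.univ.filter (fun i => mvgX M i ω ≤ k)).card)
      = fun ω => ∑ i : Fin n, if mvgX M i ω ≤ k then 1 else 0 := by
    funext ω
    rw [Finset.card_filter]
  rw [hfun]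
  exact Finset.measurable_sum _ fun i _ =>
    Measurable.ite (hXle i) measurable_const measurable_const

lemma measurable_tail_event (hM : ∀ I, Measurable (M I)) {r : ℕ} (hrn : r ≤ n) (k : ℕ) :
    MeasurableSet {ω | k < orderStat r (fun i => mvgX M i) ω} := by
  have hs : {ω | k < orderStat r (fun i => mvgX M i) ω}
      = (fun ω => (Finset.univ.filter (fun i => mvgX M i ω ≤ k)).card) ⁻¹' (Set.Iio r) := by
    ext ω
    simp [lt_orderStat_iff hrn]
  rw [hs]
  exact measurable_card_le M hM k measurableSet_Iio

end meas

lemma desc_telescope (p : ℕ) (hp : 1 ≤ p) (x : ℕ) :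
    x.descFactorial p = ∑ k ∈ Finset.range x, p * k.descFactorial (p-1) := by
  induction x with
  | zero =>
    obtain ⟨q, rfl⟩ : ∃ q, p = q + 1 := ⟨p - 1, by omega⟩
    simp
  | succ x ih =>
    rw [Finset.sum_range_succ, ← ih]
    obtain ⟨q, rfl⟩ : ∃ q, p = q + 1 := ⟨p - 1, by omega⟩
    simp only [Nat.add_sub_cancel]
    rw [Nat.succ_descFactorial_succ, Nat.descFactorial_succ]
    rcases le_or_gt q x with h | h
    · have : x - q + (q + 1) = x + 1 := by omega
      calc (x+1) * x.descFactorial q = (x - q + (q+1)) * x.descFactorial q := by rw [this]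
      _ = (x-q) * x.descFactorial q + (q+1) * x.descFactorial q := by ring
    · rw [Nat.descFactorial_of_lt h]
      simp

lemma lintegral_descFactorial {Ω : Type*} [MeasurableSpace Ω] (μ : Measure Ω)
    (f : Ω → ℕ) (hf : ∀ k, MeasurableSet {ω | k < f ω}) (p : ℕ) (hp : 1 ≤ p) :
    ∫⁻ ω, (((f ω).descFactorial p : ℕ) : ℝ≥0∞) ∂μ
      = ∑' k : ℕ, ((p * k.descFactorial (p-1) : ℕ) : ℝ≥0∞) * μ {ω | k < f ω} := by
  have hpt : ∀ ω, (((f ω).descFactorial p : ℕ) : ℝ≥0∞)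
      = ∑' k : ℕ, Set.indicator {ω' | k < f ω'}
          (fun _ => ((p * k.descFactorial (p-1) : ℕ) : ℝ≥0∞)) ω := by
    intro ω
    rw [tsum_eq_sum (s := Finset.range (f ω)) (f := fun k => Set.indicator {ω' | k < f ω'}
          (fun _ => ((p * k.descFactorial (p-1) : ℕ) : ℝ≥0∞)) ω) ?_]
    · rw [Finset.sum_congr rfl (fun k hk => Set.indicator_of_mem
        (show ω ∈ {ω' | k < f ω'} from Finset.mem_range.1 hk) _)]
      rw [desc_telescope p hp (f ω), Nat.cast_sum]
    · intro k hk
      exact Set.indicator_of_notMem (by simp only [Finset.mem_range, not_lt] at hk; simpa using hk) _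
  calc ∫⁻ ω, (((f ω).descFactorial p : ℕ) : ℝ≥0∞) ∂μ
      = ∫⁻ ω, ∑' k : ℕ, Set.indicator {ω' | k < f ω'}
          (fun _ => ((p * k.descFactorial (p-1) : ℕ) : ℝ≥0∞)) ω ∂μ := lintegral_congr hpt
  _ = ∑' k : ℕ, ∫⁻ ω, Set.indicator {ω' | k < f ω'}
          (fun _ => ((p * k.descFactorial (p-1) : ℕ) : ℝ≥0∞)) ω ∂μ :=
        lintegral_tsum (fun k => (measurable_const.indicator (hf k)).aemeasurable)
  _ = ∑' k : ℕ, ((p * k.descFactorial (p-1) : ℕ) : ℝ≥0∞) * μ {ω | k < f ω} := by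
      apply tsum_congr
      intro k
      rw [lintegral_indicator_const (hf k)]

section tail
open Finset
variable {Ω : Type*} [MeasurableSpace Ω] (μ : Measure Ω) [IsProbabilityMeasure μ]
  {n : ℕ} (θ : ℕ → ℝ) (M : {I : Finset (Fin n) // I.Nonempty} → Ω → ℕ)

lemma tail_formula (hθ0 : ∀ s, 0 ≤ θ s)
    (hM : ∀ I, Measurable (M I))
    (hindep : iIndepFun M μ)
    (hgeo : ∀ (I : {I : Finset (Fin n) // I.Nonempty}) (k : ℕ),
      μ {ω | k < M I ω} = ENNReal.ofReal (θ I.1.card ^ (k + 1)))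
    {r : ℕ} (hr : 1 ≤ r) (hrn : r ≤ n) (k : ℕ) :
    (μ {ω | k < orderStat r (fun i => mvgX M i) ω}).toReal
      = ∑ j ∈ Finset.range r, (-1:ℝ)^(r-1-j) * ((n-j-1).choose (n-r)) * (n.choose j) *
          (∏ s ∈ Finset.Icc 1 n, θ s ^ (n.choose s - j.choose s))^(k+1) := by
  classical
  set X : Fin n → Ω → ℕ := fun i => mvgX M i with hX
  -- pointwise inclusion-exclusion identity
  have hpt : ∀ ω, Set.indicator {ω' | k < orderStat r X ω'} (1 : Ω → ℝ) ω
      = ∑ j ∈ Finset.range r, ∑ S ∈ Finset.powersetCard (n-j) (Finset.univ : Finset (Fin n)),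
          ((-1:ℝ)^(r-1-j) * ((n-j-1).choose (n-r))) *
            Set.indicator (⋂ i ∈ S, {ω' | k < X i ω'}) (1 : Ω → ℝ) ω := by
    intro ω
    set A : Finset (Fin n) := Finset.univ.filter (fun i => X i ω ≤ k) with hA
    have hN : A.card ≤ n := by simpa using Finset.card_le_univ A
    have hL : Set.indicator {ω' | k < orderStat r X ω'} (1 : Ω → ℝ) ω
        = if A.card < r then 1 else 0 := by
      by_cases h : A.card < r
      · rw [if_pos h, Set.indicator_of_mem
          (show ω ∈ {ω' | k < orderStat r X ω'} from (lt_orderStat_iff hrn X ω k).2 h) (1 : Ω → ℝ)]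
        simp
      · rw [if_neg h, Set.indicator_of_notMem]
        intro hmem
        exact h ((lt_orderStat_iff hrn X ω k).1 hmem)
    have hind : ∀ S : Finset (Fin n),
        Set.indicator (⋂ i ∈ S, {ω' | k < X i ω'}) (1 : Ω → ℝ) ω
          = if S ⊆ Aᶜ then 1 else 0 := by
      intro S
      by_cases h : S ⊆ Aᶜ
      · rw [if_pos h, Set.indicator_of_mem]
        · rfl
        · refine Set.mem_iInter₂.2 fun i hi => ?_
          have := h hi
          rw [Finset.mem_compl, hA, Finset.mem_filter] at this
          push_neg at this
          exact this (Finset.mem_univ i)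
      · rw [if_neg h, Set.indicator_of_notMem]
        intro hmem
        apply h
        intro i hi
        rw [Finset.mem_compl, hA, Finset.mem_filter]
        push_neg
        intro _
        exact Set.mem_iInter₂.1 hmem i hi
    have hinner : ∀ j,
        (∑ S ∈ Finset.powersetCard (n-j) (Finset.univ : Finset (Fin n)),
          Set.indicator (⋂ i ∈ S, {ω' | k < X i ω'}) (1 : Ω → ℝ) ω)
          = ((n - A.card).choose (n-j) : ℝ) := by
      intro j
      rw [Finset.sum_congr rfl (fun S _ => hind S), Finset.sum_boole]
      have hfil : (Finset.powersetCard (n-j) (Finset.univ : Finset (Fin n))).filter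
          (fun S => S ⊆ Aᶜ) = Finset.powersetCard (n-j) Aᶜ := by
        ext S
        simp only [Finset.mem_filter, Finset.mem_powersetCard, Finset.subset_univ, true_and]
        tauto
      rw [hfil, Finset.card_powersetCard, Finset.card_compl, Fintype.card_fin]
    rw [hL, ← comb_real n r A.card hr hrn hN]
    apply Finset.sum_congr rfl
    intro j hj
    rw [← Finset.mul_sum, hinner j]
  -- measurability
  have hEmeas : MeasurableSet {ω' | k < orderStat r X ω'} := measurable_tail_event M hM hrn k
  have hSmeas : ∀ S : Finset (Fin n), MeasurableSet (⋂ i ∈ S, {ω' | k < X i ω'}) := by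
    intro S
    exact MeasurableSet.biInter (Set.to_countable _)
      (fun i _ => measurable_lt_mvgX M hM i k)
  -- integrate the pointwise identity
  have hint : (μ {ω' | k < orderStat r X ω'}).toReal
      = ∑ j ∈ Finset.range r, ∑ S ∈ Finset.powersetCard (n-j) (Finset.univ : Finset (Fin n)),
          ((-1:ℝ)^(r-1-j) * ((n-j-1).choose (n-r))) *
            (μ (⋂ i ∈ S, {ω' | k < X i ω'})).toReal := by
    have h1 : ∫ ω, Set.indicator {ω' | k < orderStat r X ω'} (1 : Ω → ℝ) ω ∂μ
        = ∫ ω, (∑ j ∈ Finset.range r,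
            ∑ S ∈ Finset.powersetCard (n-j) (Finset.univ : Finset (Fin n)),
            ((-1:ℝ)^(r-1-j) * ((n-j-1).choose (n-r))) *
              Set.indicator (⋂ i ∈ S, {ω' | k < X i ω'}) (1 : Ω → ℝ) ω) ∂μ :=
      integral_congr_ae (Filter.Eventually.of_forall hpt)
    calc (μ {ω' | k < orderStat r X ω'}).toReal
        = ∫ ω, Set.indicator {ω' | k < orderStat r X ω'} (1 : Ω → ℝ) ω ∂μ :=
          (integral_indicator_one hEmeas).symm
    _ = ∫ ω, (∑ j ∈ Finset.range r,
            ∑ S ∈ Finset.powersetCard (n-j) (Finset.univ : Finset (Fin n)),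
            ((-1:ℝ)^(r-1-j) * ((n-j-1).choose (n-r))) *
              Set.indicator (⋂ i ∈ S, {ω' | k < X i ω'}) (1 : Ω → ℝ) ω) ∂μ := h1
    _ = ∑ j ∈ Finset.range r, ∫ ω, (∑ S ∈ Finset.powersetCard (n-j) (Finset.univ : Finset (Fin n)),
            ((-1:ℝ)^(r-1-j) * ((n-j-1).choose (n-r))) *
              Set.indicator (⋂ i ∈ S, {ω' | k < X i ω'}) (1 : Ω → ℝ) ω) ∂μ :=
          integral_finset_sum _ (fun j _ => integrable_finset_sum _
            (fun S _ => (((integrable_const (1:ℝ)).indicator (hSmeas S)).const_mul _)))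
    _ = ∑ j ∈ Finset.range r, ∑ S ∈ Finset.powersetCard (n-j) (Finset.univ : Finset (Fin n)),
            ∫ ω, ((-1:ℝ)^(r-1-j) * ((n-j-1).choose (n-r))) *
              Set.indicator (⋂ i ∈ S, {ω' | k < X i ω'}) (1 : Ω → ℝ) ω ∂μ :=
          Finset.sum_congr rfl (fun j _ => integral_finset_sum _
            (fun S _ => (((integrable_const (1:ℝ)).indicator (hSmeas S)).const_mul _)))
    _ = ∑ j ∈ Finset.range r, ∑ S ∈ Finset.powersetCard (n-j) (Finset.univ : Finset (Fin n)),
          ((-1:ℝ)^(r-1-j) * ((n-j-1).choose (n-r))) *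
            (μ (⋂ i ∈ S, {ω' | k < X i ω'})).toReal := by
          apply Finset.sum_congr rfl
          intro j _
          apply Finset.sum_congr rfl
          intro S _
          rw [integral_const_mul, integral_indicator_one (hSmeas S)]; rfl
  rw [hint]
  apply Finset.sum_congr rfl
  intro j hj
  rw [Finset.mem_range] at hj
  have hterm : ∀ S ∈ Finset.powersetCard (n-j) (Finset.univ : Finset (Fin n)),
      ((-1:ℝ)^(r-1-j) * ((n-j-1).choose (n-r))) * (μ (⋂ i ∈ S, {ω' | k < X i ω'})).toReal
      = ((-1:ℝ)^(r-1-j) * ((n-j-1).choose (n-r))) *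
          (∏ s ∈ Finset.Icc 1 n, θ s ^ (n.choose s - j.choose s))^(k+1) := by
    intro S hS
    have hcardS : S.card = n - j := (Finset.mem_powersetCard.1 hS).2
    have hcardSc : Sᶜ.card = j := by
      rw [Finset.card_compl, hcardS, Fintype.card_fin]
      omega
    rw [meas_inter_tail μ θ M hθ0 hindep hgeo S k, hcardSc, ENNReal.toReal_ofReal]
    exact pow_nonneg (Finset.prod_nonneg (fun s _ => pow_nonneg (hθ0 s) _)) _
  rw [Finset.sum_congr rfl hterm, Finset.sum_const, Finset.card_powersetCard,
    Finset.card_univ, Fintype.card_fin, Nat.choose_symm (show j ≤ n by omega), nsmul_eq_mul]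
  ring

end tail

/-- Factorial moments of order statistics of an exchangeable MVG vector whose parameters
`θ_I = θ_{|I|}` depend only on the cardinality of `I`. -/
theorem stmt19 {Ω : Type*} [MeasurableSpace Ω] (μ : Measure Ω) [IsProbabilityMeasure μ]
    {n : ℕ} (θ : ℕ → ℝ) (hθ0 : ∀ s, 0 ≤ θ s) (hθ1 : ∀ s, θ s ≤ 1)
    (hlt : ∃ s, 1 ≤ s ∧ s ≤ n ∧ θ s < 1)
    (M : {I : Finset (Fin n) // I.Nonempty} → Ω → ℕ)
    (hM : ∀ I, Measurable (M I))
    (hindep : iIndepFun M μ)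
    (hgeo : ∀ (I : {I : Finset (Fin n) // I.Nonempty}) (k : ℕ),
      μ {ω | k < M I ω} = ENNReal.ofReal (θ I.1.card ^ (k + 1)))
    (r : ℕ) (hr : 1 ≤ r) (hrn : r ≤ n) (p : ℕ) (hp : 1 ≤ p) :
    (∫⁻ ω, (((∏ j ∈ Finset.range p, (orderStat r (fun i => mvgX M i) ω - j)) : ℕ) : ℝ≥0∞) ∂μ).toReal
      = (p.factorial : ℝ) *
        ∑ j ∈ Finset.range r, (-1 : ℝ) ^ (r - 1 - j) * ((n - j - 1).choose (n - r)) *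
          (n.choose j) *
          (1 / (1 - ∏ s ∈ Finset.Icc 1 n, θ s ^ (n.choose s - j.choose s)) - 1) ^ p := by
  classical
  obtain ⟨s0, hs01, hs0n, hs0lt⟩ := hlt
  set q : ℕ → ℝ := fun j => ∏ s ∈ Finset.Icc 1 n, θ s ^ (n.choose s - j.choose s) with hq
  have hq0 : ∀ j, 0 ≤ q j := fun j => Finset.prod_nonneg (fun s _ => pow_nonneg (hθ0 s) _)
  have hq1 : ∀ j, j < r → q j < 1 := by
    intro j hj
    have hs0mem : s0 ∈ Finset.Icc 1 n := Finset.mem_Icc.2 ⟨hs01, hs0n⟩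
    have hexp : n.choose s0 - j.choose s0 ≠ 0 := by
      have h1 : j.choose s0 ≤ (n-1).choose s0 := Nat.choose_le_choose s0 (by omega)
      have h2 : (n-1).choose s0 < n.choose s0 := by
        obtain ⟨t, rfl⟩ : ∃ t, s0 = t + 1 := ⟨s0 - 1, by omega⟩
        obtain ⟨m, rfl⟩ : ∃ m, n = m + 1 := ⟨n - 1, by omega⟩
        simp only [Nat.add_sub_cancel]
        rw [Nat.choose_succ_succ]
        have : 0 < m.choose t := Nat.choose_pos (by omega)
        simp only [Nat.succ_eq_add_one] at *
        omega
      omega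
    calc q j = θ s0 ^ (n.choose s0 - j.choose s0) *
          ∏ s ∈ (Finset.Icc 1 n).erase s0, θ s ^ (n.choose s - j.choose s) :=
        (Finset.mul_prod_erase _ _ hs0mem).symm
    _ ≤ θ s0 ^ (n.choose s0 - j.choose s0) * 1 := by
        apply mul_le_mul_of_nonneg_left _ (pow_nonneg (hθ0 s0) _)
        exact Finset.prod_le_one (fun s _ => pow_nonneg (hθ0 s) _)
          (fun s _ => pow_le_one₀ (hθ0 s) (hθ1 s))
    _ = θ s0 ^ (n.choose s0 - j.choose s0) := mul_one _
    _ < 1 := pow_lt_one₀ (hθ0 s0) hs0lt hexp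
  have hint : ∀ ω, ((((∏ j ∈ Finset.range p, (orderStat r (fun i => mvgX M i) ω - j)) : ℕ)) : ℝ≥0∞)
      = (((orderStat r (fun i => mvgX M i) ω).descFactorial p : ℕ) : ℝ≥0∞) := fun ω => by
    rw [Nat.descFactorial_eq_prod_range]
  rw [lintegral_congr hint,
    lintegral_descFactorial μ _ (fun k => measurable_tail_event M hM hrn k) p hp]
  set T : ℕ → ℝ := fun k => ∑ j ∈ Finset.range r,
      (-1:ℝ)^(r-1-j) * ((n-j-1).choose (n-r)) * (n.choose j) * (q j)^(k+1) with hT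
  have htailT : ∀ k, (μ {ω | k < orderStat r (fun i => mvgX M i) ω}).toReal = T k :=
    fun k => tail_formula μ θ M hθ0 hM hindep hgeo hr hrn k
  have hT0 : ∀ k, 0 ≤ T k := fun k => (htailT k) ▸ ENNReal.toReal_nonneg
  have hμtail : ∀ k, μ {ω | k < orderStat r (fun i => mvgX M i) ω} = ENNReal.ofReal (T k) := by
    intro k
    rw [← htailT k, ENNReal.ofReal_toReal (measure_ne_top μ _)]
  have hterm : ∀ k : ℕ, ((p * k.descFactorial (p-1) : ℕ) : ℝ≥0∞) *
      μ {ω | k < orderStat r (fun i => mvgX M i) ω}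
      = ENNReal.ofReal (((p * k.descFactorial (p-1) : ℕ) : ℝ) * T k) := by
    intro k
    rw [hμtail k, ← ENNReal.ofReal_natCast, ← ENNReal.ofReal_mul (Nat.cast_nonneg _)]
  rw [tsum_congr hterm]
  set F : ℕ → ℕ → ℝ := fun j k => ((p * k.descFactorial (p-1) : ℕ) : ℝ) *
      ((-1:ℝ)^(r-1-j) * ((n-j-1).choose (n-r)) * (n.choose j) * (q j)^(k+1)) with hF
  have hdecomp : ∀ k, ((p * k.descFactorial (p-1) : ℕ) : ℝ) * T k
      = ∑ j ∈ Finset.range r, F j k := by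
    intro k
    rw [hT, Finset.mul_sum]
  have hhs : ∀ j, j < r → HasSum (F j)
      (((-1:ℝ)^(r-1-j) * ((n-j-1).choose (n-r)) * (n.choose j)) *
        ((p.factorial:ℝ) * (1/(1 - q j) - 1)^p)) := by
    intro j hj
    have h := (hasSum_tail_series p hp (hq0 j) (hq1 j hj)).mul_left
      ((-1:ℝ)^(r-1-j) * ((n-j-1).choose (n-r)) * (n.choose j))
    apply h.congr_fun
    intro k
    simp only [hF]
    push_cast
    ring
  have hFsummable : ∀ j ∈ Finset.range r, Summable (F j) :=
    fun j hj => (hhs j (Finset.mem_range.1 hj)).summable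
  have hgsummable : Summable (fun k => ((p * k.descFactorial (p-1) : ℕ) : ℝ) * T k) :=
    (summable_sum hFsummable).congr (fun k => (hdecomp k).symm)
  rw [← ENNReal.ofReal_tsum_of_nonneg
      (fun k => mul_nonneg (Nat.cast_nonneg _) (hT0 k)) hgsummable,
    ENNReal.toReal_ofReal
      (tsum_nonneg (fun k => mul_nonneg (Nat.cast_nonneg _) (hT0 k)))]
  calc ∑' k : ℕ, ((p * k.descFactorial (p-1) : ℕ) : ℝ) * T k
      = ∑' k : ℕ, ∑ j ∈ Finset.range r, F j k := tsum_congr hdecomp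
  _ = ∑ j ∈ Finset.range r, ∑' k : ℕ, F j k := Summable.tsum_finsetSum hFsummable
  _ = ∑ j ∈ Finset.range r, ((-1:ℝ)^(r-1-j) * ((n-j-1).choose (n-r)) * (n.choose j)) *
        ((p.factorial:ℝ) * (1/(1 - q j) - 1)^p) :=
      Finset.sum_congr rfl (fun j hj => (hhs j (Finset.mem_range.1 hj)).tsum_eq)
  _ = (p.factorial : ℝ) * ∑ j ∈ Finset.range r, (-1 : ℝ) ^ (r - 1 - j) *
        ((n - j - 1).choose (n - r)) * (n.choose j) * (1 / (1 - q j) - 1) ^ p := by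
      rw [Finset.mul_sum]
      exact Finset.sum_congr rfl (fun j _ => by ring)
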